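/- The van Benthem axiom □◇⊤ → □(□(□p → p) → p) is valid over the van Benthem general frame 𝒱ℬ: for every valuation assigning admissible sets to propositional variables, the axiom is true at every point; whereas □◇⊤ → □⊥ fails at the point ∞+1. -/
import Mathlib


/-- Worlds of the van Benthem frame: ℕ together with ∞ and ∞+1. -/
inductive VBW : Type
  | nat : ℕ → VBW
  | inf : VBW
  | infp : VBW

/-- Accessibility relation of the van Benthem frame. -/
def VBR : VBW → VBW → Prop
  | VBW.infp, VBW.inf => True
  | VBW.inf, VBW.inf => True
  | VBW.inf, VBW.nat _ => True
  | VBW.nat m, VBW.nat n => n < m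
  | _, _ => False

/-- Admissible sets: finite sets not containing ∞ and cofinite sets containing ∞. -/
def VBAdm (A : Set VBW) : Prop :=
  (A.Finite ∧ VBW.inf ∉ A) ∨ (Aᶜ.Finite ∧ VBW.inf ∈ A)

lemma VBW.nat_inj : Function.Injective VBW.nat := by
  intro a b h; cases h; rfl

lemma nat0_dead : ∀ u, ¬ VBR (VBW.nat 0) u := by
  intro u hu; cases u <;> simp [VBR] at hu

/-- The van Benthem axiom `□◇⊤ → □(□(□p → p) → p)` is valid over the van
Benthem general frame (true at every point under every admissible valuation),
while `□◇⊤ → □⊥` fails at the point `∞+1`. -/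
theorem stmt_12 :
    (∀ P : Set VBW, VBAdm P → ∀ w : VBW,
      (∀ v, VBR w v → ∃ u, VBR v u) →
      ∀ v, VBR w v →
        ((∀ u, VBR v u → ((∀ t, VBR u t → t ∈ P) → u ∈ P)) → v ∈ P)) ∧
    ¬ ((∀ v, VBR VBW.infp v → ∃ u, VBR v u) → ∀ v, ¬ VBR VBW.infp v) := by
  constructor
  · intro P hP w hw v hwv H
    have main : (∀ u, VBR VBW.inf u → ((∀ t, VBR u t → t ∈ P) → u ∈ P)) → VBW.inf ∈ P := by
      intro H
      have hnat : ∀ n, VBW.nat n ∈ P := by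
        intro n
        induction n using Nat.strong_induction_on with
        | _ n ih =>
          apply H (VBW.nat n) (by simp [VBR])
          intro t ht
          cases t with
          | nat k => exact ih k (by simpa [VBR] using ht)
          | inf => simp [VBR] at ht
          | infp => simp [VBR] at ht
      by_contra hinf
      rcases hP with ⟨hfin, _⟩ | ⟨_, hmem⟩
      · exact hfin.not_infinite
          (Set.infinite_of_injective_forall_mem VBW.nat_inj hnat)
      · exact hinf hmem
    cases w with
    | nat m =>
      cases v with
      | nat n =>
        exfalso
        have hm : 0 < m := lt_of_le_of_lt (Nat.zero_le n) (by simpa [VBR] using hwv)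
        obtain ⟨u, hu⟩ := hw (VBW.nat 0) (by simpa [VBR] using hm)
        exact nat0_dead u hu
      | inf => simp [VBR] at hwv
      | infp => simp [VBR] at hwv
    | inf =>
      exfalso
      obtain ⟨u, hu⟩ := hw (VBW.nat 0) (by simp [VBR])
      exact nat0_dead u hu
    | infp =>
      cases v with
      | nat n => simp [VBR] at hwv
      | inf => exact main H
      | infp => simp [VBR] at hwv
  · intro h
    refine h ?_ VBW.inf (by simp [VBR])
    intro v hv
    cases v with
    | nat n => simp [VBR] at hv
    | inf => exact ⟨VBW.inf, by simp [VBR]⟩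
    | infp => simp [VBR] at hv
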